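/- Suppose ρ is normalized Lipschitz, W : I² → ℝ is measurable with |W| ≤ 1 a.e., and the filter coefficients (h_{fgk}^{(ℓ)}) satisfy |h_{fgk}^{(ℓ)}| ≤ h̄ for all f,g ∈ {1,…,F}, k ∈ {0,…,K−1}, ℓ ∈ {1,…,L}. Then for any X, X̃ ∈ L^∞(I; ℝ^F), the L-layer graphon neural network satisfies ‖Φ(W; X; h) − Φ(W; X̃; h)‖_{L^∞(I;ℝ^F)} ≤ (F K h̄)^L ‖X − X̃‖_{L^∞(I;ℝ^F)}. -/

import Mathlib

open MeasureTheory Filter Set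
open scoped ENNReal NNReal

noncomputable section

/-- Lebesgue measure restricted to the unit interval `I = [0,1]`. -/
def μI : Measure ℝ := volume.restrict (Set.Icc (0:ℝ) 1)

/-- Lebesgue measure restricted to the unit square `I² = [0,1]²`. -/
def μI2 : Measure (ℝ × ℝ) := volume.restrict ((Set.Icc (0:ℝ) 1) ×ˢ (Set.Icc (0:ℝ) 1))

/-- The graphon integral operator `(T_W x)(v) = ∫_I W(u,v) x(u) du`. -/
def graphonOp (W : ℝ → ℝ → ℝ) (x : ℝ → ℝ) : ℝ → ℝ :=
  fun v => ∫ u in Set.Icc (0:ℝ) 1, W u v * x u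

/-- `k`-fold composition `T_W^k` (identity for `k = 0`). -/
def graphonIter (W : ℝ → ℝ → ℝ) (k : ℕ) (x : ℝ → ℝ) : ℝ → ℝ :=
  (graphonOp W)^[k] x

/-- `ρ` is normalized Lipschitz: `|ρ x − ρ y| ≤ |x − y|` and `ρ 0 = 0`. -/
def NormalizedLipschitz (ρ : ℝ → ℝ) : Prop :=
  (∀ x y : ℝ, |ρ x - ρ y| ≤ |x - y|) ∧ ρ 0 = 0

/-- One layer of a graphon neural network. -/
def gnnLayer (F K : ℕ) (W : ℝ → ℝ → ℝ) (ρ : ℝ → ℝ)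
    (h : Fin F → Fin F → Fin K → ℝ) (X : Fin F → ℝ → ℝ) : Fin F → ℝ → ℝ :=
  fun f u => ρ (∑ g : Fin F, ∑ k : Fin K, h f g k * graphonIter W (k : ℕ) (X g) u)

/-- The `L`-layer graphon neural network `Φ(W; X; h)`. -/
def gnn (F K L : ℕ) (W : ℝ → ℝ → ℝ) (ρ : ℝ → ℝ)
    (h : Fin L → Fin F → Fin F → Fin K → ℝ) (X : Fin F → ℝ → ℝ) : Fin F → ℝ → ℝ :=
  (List.ofFn h).foldl (fun Y hl => gnnLayer F K W ρ hl Y) X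

/-- The mixed norm `‖X‖_{L^p(I;ℝ^F)} = (∑_f ‖X_f‖_{L^p(I)}²)^{1/2}`. -/
def vecLpNorm (F : ℕ) (p : ℝ≥0∞) (X : Fin F → ℝ → ℝ) : ℝ :=
  Real.sqrt (∑ f : Fin F, ((eLpNorm (X f) p μI).toReal) ^ 2)

/-- `X : ℝ → L^∞(I;ℝ^F)` is, on `[0,T]`, a continuously differentiable solution of the
Graphon-NDE `dX/dt(t) = Φ(W; X(t); H(t))`, `X(0) = Z`, in the Banach space `L^∞(I;ℝ^F)`. -/
def IsGNDESolution (F K L : ℕ) (T : ℝ) (W : ℝ → ℝ → ℝ) (ρ : ℝ → ℝ)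
    (H : ℝ → Fin L → Fin F → Fin F → Fin K → ℝ) (Z : Fin F → ℝ → ℝ)
    (X : ℝ → Fin F → Lp ℝ ⊤ μI) : Prop :=
  (∀ f, (X 0 f : ℝ → ℝ) =ᵐ[μI] Z f) ∧
  ∃ X' : ℝ → Fin F → Lp ℝ ⊤ μI,
    ContinuousOn X' (Set.Icc 0 T) ∧
    ∀ t ∈ Set.Icc (0:ℝ) T,
      HasDerivWithinAt X (X' t) (Set.Icc 0 T) t ∧
      ∀ f, (X' t f : ℝ → ℝ) =ᵐ[μI]
        gnn F K L W ρ (H t) (fun g => (X t g : ℝ → ℝ)) f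

/-- Operator norm (from `L²(I)` to `L²(I)`) of the difference `T_W − T_{W'}`. -/
def graphonOpNormSub (W W' : ℝ → ℝ → ℝ) : ℝ :=
  ⨆ x : {x : ℝ → ℝ // MemLp x 2 μI ∧ eLpNorm x 2 μI ≤ 1},
    (eLpNorm (fun v => graphonOp W x v - graphonOp W' x v) 2 μI).toReal

/-- Left endpoint `u_i = (i−1)/n` of the cell `I_i` containing `u`. -/
def stepPt (n : ℕ) (u : ℝ) : ℝ := (⌊(n : ℝ) * u⌋ : ℝ) / n

/-- Sampled step kernel: `Wₙ(u,v) = W(u_i,u_j)` for `(u,v) ∈ I_i × I_j`. -/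
def sampKernel (W : ℝ → ℝ → ℝ) (n : ℕ) : ℝ → ℝ → ℝ :=
  fun u v => W (stepPt n u) (stepPt n v)

/-- Sampled step datum: `Zₙ(u) = Z(u_i)` for `u ∈ I_i`. -/
def sampDatum (F : ℕ) (Z : Fin F → ℝ → ℝ) (n : ℕ) : Fin F → ℝ → ℝ :=
  fun f u => Z f (stepPt n u)

/-- Support `W⁺ = {(u,v) ∈ I² : W(u,v) = 1}`. -/
def supportSet (W : ℝ → ℝ → ℝ) : Set (ℝ × ℝ) :=
  {p : ℝ × ℝ | p.1 ∈ Set.Icc (0:ℝ) 1 ∧ p.2 ∈ Set.Icc (0:ℝ) 1 ∧ W p.1 p.2 = 1}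

/-- The cell `I_i = [u_i, u_i + 1/n)` containing `u`. -/
def cell (n : ℕ) (u : ℝ) : Set ℝ := Set.Ico (stepPt n u) (stepPt n u + 1 / n)

open scoped Classical in
/-- Cell-intersection step kernel: `Wₙ = 1` on `I_i × I_j` iff `(I_i × I_j) ∩ W⁺ ≠ ∅`. -/
def interKernel (W : ℝ → ℝ → ℝ) (n : ℕ) : ℝ → ℝ → ℝ :=
  fun u v => if ((cell n u ×ˢ cell n v) ∩ supportSet W).Nonempty then 1 else 0

/-- Cell-average step datum: `Zₙ(u) = n ∫_{I_i} Z(v) dv` for `u ∈ I_i`. -/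
def cellAvg (F : ℕ) (Z : Fin F → ℝ → ℝ) (n : ℕ) : Fin F → ℝ → ℝ :=
  fun f u => (n : ℝ) * ∫ v in cell n u, Z f v

/-- Number of closed `δ`-mesh squares `[iδ,(i+1)δ] × [jδ,(j+1)δ]`, `i,j ∈ ℤ`, meeting `Ω`. -/
def meshCount (δ : ℝ) (Ω : Set (ℝ × ℝ)) : ℕ :=
  Set.ncard {p : ℤ × ℤ |
    ((Set.Icc ((p.1 : ℝ) * δ) (((p.1 : ℝ) + 1) * δ) ×ˢ
      Set.Icc ((p.2 : ℝ) * δ) (((p.2 : ℝ) + 1) * δ)) ∩ Ω).Nonempty}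

/-- Upper box-counting dimension `limsup_{δ→0⁺} log N_δ(Ω) / (−log δ)`. -/
def upperBoxDim (Ω : Set (ℝ × ℝ)) : ℝ :=
  Filter.limsup (fun δ : ℝ => Real.log (meshCount δ Ω) / (-Real.log δ))
    (nhdsWithin 0 (Set.Ioi 0))

end

section AuxGNN
open MeasureTheory

lemma μI_univ : μI Set.univ = 1 := by
  simp [μI, Real.volume_Icc]

instance : IsProbabilityMeasure μI := ⟨μI_univ⟩

lemma μI2_eq_prod : μI2 = μI.prod μI := by
  rw [μI2, μI, Measure.prod_restrict, ← MeasureTheory.Measure.volume_eq_prod ℝ ℝ]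

lemma aeW {W : ℝ → ℝ → ℝ} (hWm : Measurable (Function.uncurry W))
    (hWb : ∀ᵐ q ∂μI2, |Function.uncurry W q| ≤ 1) :
    ∀ᵐ v ∂μI, ∀ᵐ u ∂μI, |W u v| ≤ 1 := by
  rw [μI2_eq_prod] at hWb
  have hmeas : MeasurableSet {q : ℝ × ℝ | |Function.uncurry W q| ≤ 1} :=
    measurableSet_le hWm.abs measurable_const
  have hmap : (μI.prod μI).map Prod.swap = μI.prod μI := Measure.prod_swap
  have h1 : ∀ᵐ q ∂(μI.prod μI).map Prod.swap, |Function.uncurry W q| ≤ 1 := by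
    rw [hmap]; exact hWb
  have h2 : ∀ᵐ q ∂(μI.prod μI), |W q.2 q.1| ≤ 1 :=
    (MeasureTheory.ae_map_iff measurable_swap.aemeasurable hmeas).mp h1
  exact Measure.ae_ae_of_ae_prod h2

lemma graphonOp_eq_integral (W : ℝ → ℝ → ℝ) (x : ℝ → ℝ) (v : ℝ) :
    graphonOp W x v = ∫ u, W u v * x u ∂μI := rfl

lemma memLp_top_ae_bound {f : ℝ → ℝ} (hf : MemLp f ⊤ μI) :
    ∀ᵐ u ∂μI, |f u| ≤ (eLpNorm f ⊤ μI).toReal := by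
  filter_upwards [ae_le_eLpNormEssSup (f := f) (μ := μI)] with u hu
  have h1 : (‖f u‖₊ : ℝ≥0∞) ≤ eLpNorm f ⊤ μI := by
    rw [eLpNorm_exponent_top]; exact_mod_cast hu
  have h2 := ENNReal.toReal_mono hf.2.ne h1
  simpa [Real.norm_eq_abs] using h2

lemma eLpNorm_top_le_of_ae_bound {f : ℝ → ℝ} {C : ℝ} (hC : 0 ≤ C)
    (hb : ∀ᵐ u ∂μI, |f u| ≤ C) : (eLpNorm f ⊤ μI).toReal ≤ C := by
  have h := eLpNorm_le_of_ae_bound (μ := μI) (p := ⊤) (f := f)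
      (hb.mono fun u hu => by simpa [Real.norm_eq_abs] using hu)
  simp only [ENNReal.toReal_top, inv_zero, ENNReal.rpow_zero, one_mul] at h
  exact ENNReal.toReal_le_of_le_ofReal hC h

lemma memLp_top_of_ae_bound {f : ℝ → ℝ} (hm : AEStronglyMeasurable f μI) {C : ℝ}
    (hb : ∀ᵐ u ∂μI, |f u| ≤ C) : MemLp f ⊤ μI := by
  refine ⟨hm, ?_⟩
  have h := eLpNorm_le_of_ae_bound (μ := μI) (p := ⊤) (f := f)
      (hb.mono fun u hu => by simpa [Real.norm_eq_abs] using hu)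
  simp only [ENNReal.toReal_top, inv_zero, ENNReal.rpow_zero, one_mul] at h
  exact lt_of_le_of_lt h ENNReal.ofReal_lt_top

lemma graphonOp_congr {W : ℝ → ℝ → ℝ} {x x' : ℝ → ℝ} (hxx : x =ᵐ[μI] x') :
    graphonOp W x = graphonOp W x' := by
  funext v
  simp only [graphonOp_eq_integral]
  exact integral_congr_ae (hxx.mono fun u hu => by dsimp only; rw [hu])

lemma graphonOp_aesm {W : ℝ → ℝ → ℝ} (hWm : Measurable (Function.uncurry W))
    {x : ℝ → ℝ} (hx : AEStronglyMeasurable x μI) :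
    AEStronglyMeasurable (graphonOp W x) μI := by
  rw [graphonOp_congr hx.ae_eq_mk]
  have hg : StronglyMeasurable (fun p : ℝ × ℝ => W p.2 p.1 * (hx.mk x) p.2) :=
    ((hWm.comp measurable_swap).mul
      (hx.measurable_mk.comp measurable_snd)).stronglyMeasurable
  have h := hg.integral_prod_right' (ν := μI)
  exact h.aestronglyMeasurable

lemma graphonOp_ae_bound {W : ℝ → ℝ → ℝ}
    (hW : ∀ᵐ v ∂μI, ∀ᵐ u ∂μI, |W u v| ≤ 1)
    {x : ℝ → ℝ} {C : ℝ} (hx : ∀ᵐ u ∂μI, |x u| ≤ C) :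
    ∀ᵐ v ∂μI, |graphonOp W x v| ≤ C := by
  filter_upwards [hW] with v hWv
  have hb : ∀ᵐ u ∂μI, ‖W u v * x u‖ ≤ C := by
    filter_upwards [hWv, hx] with u h1 h2
    rw [Real.norm_eq_abs, abs_mul]
    calc |W u v| * |x u| ≤ 1 * C := mul_le_mul h1 h2 (abs_nonneg _) zero_le_one
      _ = C := one_mul C
  have h := norm_integral_le_of_norm_le_const (μ := μI) hb
  rw [graphonOp_eq_integral]
  simpa [μI_univ, Real.norm_eq_abs] using h

lemma integrable_kernel_mul {W : ℝ → ℝ → ℝ} (hWm : Measurable (Function.uncurry W))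
    {x : ℝ → ℝ} (hx : MemLp x ⊤ μI) {v : ℝ} (hWv : ∀ᵐ u ∂μI, |W u v| ≤ 1) :
    Integrable (fun u => W u v * x u) μI := by
  have hm : AEStronglyMeasurable (fun u => W u v * x u) μI :=
    ((hWm.comp measurable_prodMk_right).aestronglyMeasurable.mul hx.1)
  refine Integrable.mono' (integrable_const ((eLpNorm x ⊤ μI).toReal)) hm ?_
  filter_upwards [hWv, memLp_top_ae_bound hx] with u h1 h2
  rw [Real.norm_eq_abs, abs_mul]
  calc |W u v| * |x u| ≤ 1 * (eLpNorm x ⊤ μI).toReal :=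
        mul_le_mul h1 h2 (abs_nonneg _) zero_le_one
    _ = _ := one_mul _

lemma graphonOp_sub_ae {W : ℝ → ℝ → ℝ} (hWm : Measurable (Function.uncurry W))
    (hW : ∀ᵐ v ∂μI, ∀ᵐ u ∂μI, |W u v| ≤ 1)
    {x y : ℝ → ℝ} (hx : MemLp x ⊤ μI) (hy : MemLp y ⊤ μI) :
    ∀ᵐ v ∂μI, graphonOp W (fun u => x u - y u) v = graphonOp W x v - graphonOp W y v := by
  filter_upwards [hW] with v hWv
  simp only [graphonOp_eq_integral]
  rw [← integral_sub (integrable_kernel_mul hWm hx hWv) (integrable_kernel_mul hWm hy hWv)]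
  exact integral_congr_ae (Filter.Eventually.of_forall fun u => by ring)

lemma graphonIter_succ (W : ℝ → ℝ → ℝ) (k : ℕ) (x : ℝ → ℝ) :
    graphonIter W (k + 1) x = graphonOp W (graphonIter W k x) :=
  Function.iterate_succ_apply' _ _ _

lemma graphonIter_memLp {W : ℝ → ℝ → ℝ} (hWm : Measurable (Function.uncurry W))
    (hW : ∀ᵐ v ∂μI, ∀ᵐ u ∂μI, |W u v| ≤ 1)
    {x : ℝ → ℝ} (hx : MemLp x ⊤ μI) : ∀ k, MemLp (graphonIter W k x) ⊤ μI
  | 0 => hx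
  | (k + 1) => by
    rw [graphonIter_succ]
    have ih := graphonIter_memLp hWm hW hx k
    exact memLp_top_of_ae_bound (graphonOp_aesm hWm ih.1)
      (graphonOp_ae_bound hW (memLp_top_ae_bound ih))

lemma graphonIter_diff_bound {W : ℝ → ℝ → ℝ} (hWm : Measurable (Function.uncurry W))
    (hW : ∀ᵐ v ∂μI, ∀ᵐ u ∂μI, |W u v| ≤ 1)
    {x y : ℝ → ℝ} (hx : MemLp x ⊤ μI) (hy : MemLp y ⊤ μI) {C : ℝ}
    (hb : ∀ᵐ u ∂μI, |x u - y u| ≤ C) :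
    ∀ k, ∀ᵐ v ∂μI, |graphonIter W k x v - graphonIter W k y v| ≤ C
  | 0 => hb
  | (k + 1) => by
    have ihx := graphonIter_memLp hWm hW hx k
    have ihy := graphonIter_memLp hWm hW hy k
    have ih := graphonIter_diff_bound hWm hW hx hy hb k
    have hsub := graphonOp_sub_ae hWm hW ihx ihy
    have hbd := graphonOp_ae_bound hW
      (x := fun u => graphonIter W k x u - graphonIter W k y u) ih
    rw [graphonIter_succ, graphonIter_succ]
    filter_upwards [hsub, hbd] with v h1 h2
    rw [← h1]
    exact h2

lemma nl_continuous {ρ : ℝ → ℝ} (hρ : NormalizedLipschitz ρ) : Continuous ρ := by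
  have : LipschitzWith 1 ρ := LipschitzWith.of_dist_le_mul fun x y => by
    simpa [Real.dist_eq, one_mul] using hρ.1 x y
  exact this.continuous

lemma nl_abs_le {ρ : ℝ → ℝ} (hρ : NormalizedLipschitz ρ) (t : ℝ) : |ρ t| ≤ |t| := by
  simpa [hρ.2] using hρ.1 t 0

lemma gnnLayer_memLp {F K : ℕ} {W : ℝ → ℝ → ℝ} {ρ : ℝ → ℝ}
    (hWm : Measurable (Function.uncurry W))
    (hW : ∀ᵐ v ∂μI, ∀ᵐ u ∂μI, |W u v| ≤ 1) (hρ : NormalizedLipschitz ρ)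
    (hl : Fin F → Fin F → Fin K → ℝ) {X : Fin F → ℝ → ℝ}
    (hX : ∀ g, MemLp (X g) ⊤ μI) (f : Fin F) :
    MemLp (gnnLayer F K W ρ hl X f) ⊤ μI := by
  have hS : MemLp
      (fun u => ∑ g : Fin F, ∑ k : Fin K, hl f g k * graphonIter W (k : ℕ) (X g) u) ⊤ μI := by
    apply memLp_finset_sum
    intro g _
    apply memLp_finset_sum
    intro k _
    exact (graphonIter_memLp hWm hW (hX g) (k : ℕ)).const_mul _
  refine MemLp.of_le hS ((nl_continuous hρ).comp_aestronglyMeasurable hS.1) ?_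
  filter_upwards with u
  simpa [gnnLayer, Real.norm_eq_abs] using nl_abs_le hρ _

lemma vecLpNorm_nonneg (F : ℕ) (p : ℝ≥0∞) (X : Fin F → ℝ → ℝ) : 0 ≤ vecLpNorm F p X :=
  Real.sqrt_nonneg _

lemma gnnLayer_diff_bound {F K : ℕ} {W : ℝ → ℝ → ℝ} {ρ : ℝ → ℝ} {hbar : ℝ}
    (hWm : Measurable (Function.uncurry W))
    (hW : ∀ᵐ v ∂μI, ∀ᵐ u ∂μI, |W u v| ≤ 1) (hρ : NormalizedLipschitz ρ)
    (hbar0 : 0 ≤ hbar)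
    (hl : Fin F → Fin F → Fin K → ℝ) (hhl : ∀ f g k, |hl f g k| ≤ hbar)
    {X Xt : Fin F → ℝ → ℝ} (hX : ∀ g, MemLp (X g) ⊤ μI) (hXt : ∀ g, MemLp (Xt g) ⊤ μI) :
    vecLpNorm F ⊤ (fun f u => gnnLayer F K W ρ hl X f u - gnnLayer F K W ρ hl Xt f u)
      ≤ ((F : ℝ) * K * hbar) * vecLpNorm F ⊤ (fun f u => X f u - Xt f u) := by
  classical
  set d : Fin F → ℝ := fun g => (eLpNorm (fun u => X g u - Xt g u) ⊤ μI).toReal with hd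
  have hd0 : ∀ g, 0 ≤ d g := fun g => ENNReal.toReal_nonneg
  set D : ℝ := vecLpNorm F ⊤ (fun f u => X f u - Xt f u) with hD
  have hD0 : 0 ≤ D := Real.sqrt_nonneg _
  have hDsq : D = Real.sqrt (∑ g : Fin F, d g ^ 2) := rfl
  have hsum : ∑ g : Fin F, d g ≤ Real.sqrt F * D := by
    have h1 : (∑ g : Fin F, d g) ^ 2 ≤ (F : ℝ) * ∑ g : Fin F, d g ^ 2 := by
      have := sq_sum_le_card_mul_sum_sq (s := (Finset.univ : Finset (Fin F))) (f := d)
      simpa using this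
    calc ∑ g : Fin F, d g = Real.sqrt ((∑ g : Fin F, d g) ^ 2) :=
          (Real.sqrt_sq (Finset.sum_nonneg fun g _ => hd0 g)).symm
      _ ≤ Real.sqrt ((F : ℝ) * ∑ g : Fin F, d g ^ 2) := Real.sqrt_le_sqrt h1
      _ = Real.sqrt F * D := by rw [Real.sqrt_mul (Nat.cast_nonneg F), hDsq]
  have key : ∀ f : Fin F, ∀ᵐ u ∂μI,
      |gnnLayer F K W ρ hl X f u - gnnLayer F K W ρ hl Xt f u|
        ≤ (K : ℝ) * hbar * ∑ g : Fin F, d g := by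
    intro f
    have hiter : ∀ᵐ u ∂μI, ∀ (g : Fin F) (k : Fin K),
        |graphonIter W (k : ℕ) (X g) u - graphonIter W (k : ℕ) (Xt g) u| ≤ d g := by
      rw [MeasureTheory.ae_all_iff]
      intro g
      rw [MeasureTheory.ae_all_iff]
      intro k
      exact graphonIter_diff_bound hWm hW (hX g) (hXt g)
        (memLp_top_ae_bound ((hX g).sub (hXt g))) (k : ℕ)
    filter_upwards [hiter] with u hu
    simp only [gnnLayer]
    refine (hρ.1 _ _).trans ?_
    have heq : (∑ g : Fin F, ∑ k : Fin K, hl f g k * graphonIter W (k : ℕ) (X g) u)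
        - (∑ g : Fin F, ∑ k : Fin K, hl f g k * graphonIter W (k : ℕ) (Xt g) u)
        = ∑ g : Fin F, ∑ k : Fin K,
            hl f g k * (graphonIter W (k : ℕ) (X g) u - graphonIter W (k : ℕ) (Xt g) u) := by
      rw [← Finset.sum_sub_distrib]
      refine Finset.sum_congr rfl fun g _ => ?_
      rw [← Finset.sum_sub_distrib]
      exact Finset.sum_congr rfl fun k _ => by ring
    rw [heq]
    calc |∑ g : Fin F, ∑ k : Fin K,
            hl f g k * (graphonIter W (k : ℕ) (X g) u - graphonIter W (k : ℕ) (Xt g) u)|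
        ≤ ∑ g : Fin F, |∑ k : Fin K,
            hl f g k * (graphonIter W (k : ℕ) (X g) u - graphonIter W (k : ℕ) (Xt g) u)| :=
          Finset.abs_sum_le_sum_abs _ _
      _ ≤ ∑ g : Fin F, ∑ k : Fin K,
            |hl f g k * (graphonIter W (k : ℕ) (X g) u - graphonIter W (k : ℕ) (Xt g) u)| :=
          Finset.sum_le_sum fun g _ => Finset.abs_sum_le_sum_abs _ _
      _ ≤ ∑ g : Fin F, ∑ _k : Fin K, hbar * d g := by
          refine Finset.sum_le_sum fun g _ => Finset.sum_le_sum fun k _ => ?_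
          rw [abs_mul]
          exact mul_le_mul (hhl f g k) (hu g k) (abs_nonneg _) hbar0
      _ = (K : ℝ) * hbar * ∑ g : Fin F, d g := by
          simp only [Finset.sum_const, Finset.card_univ, Fintype.card_fin, nsmul_eq_mul,
            Finset.mul_sum]
          refine Finset.sum_congr rfl fun g _ => by ring
  set B : ℝ := (K : ℝ) * hbar * (Real.sqrt F * D) with hB
  have hB0 : 0 ≤ B := by positivity
  have hKd0 : 0 ≤ (K : ℝ) * hbar * ∑ g : Fin F, d g :=
    mul_nonneg (mul_nonneg (Nat.cast_nonneg K) hbar0) (Finset.sum_nonneg fun g _ => hd0 g)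
  have htf : ∀ f : Fin F,
      (eLpNorm (fun u => gnnLayer F K W ρ hl X f u - gnnLayer F K W ρ hl Xt f u) ⊤ μI).toReal
        ≤ B := by
    intro f
    refine (eLpNorm_top_le_of_ae_bound hKd0 (key f)).trans ?_
    rw [hB]
    exact mul_le_mul_of_nonneg_left hsum (mul_nonneg (Nat.cast_nonneg K) hbar0)
  calc vecLpNorm F ⊤ (fun f u => gnnLayer F K W ρ hl X f u - gnnLayer F K W ρ hl Xt f u)
      = Real.sqrt (∑ f : Fin F,
          ((eLpNorm (fun u => gnnLayer F K W ρ hl X f u - gnnLayer F K W ρ hl Xt f u) ⊤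
            μI).toReal) ^ 2) := rfl
    _ ≤ Real.sqrt (∑ _f : Fin F, B ^ 2) := by
        refine Real.sqrt_le_sqrt (Finset.sum_le_sum fun f _ => ?_)
        exact pow_le_pow_left₀ ENNReal.toReal_nonneg (htf f) 2
    _ = Real.sqrt ((F : ℝ) * B ^ 2) := by
        rw [Finset.sum_const, Finset.card_univ, Fintype.card_fin, nsmul_eq_mul]
    _ = Real.sqrt F * B := by
        rw [Real.sqrt_mul (Nat.cast_nonneg F), Real.sqrt_sq hB0]
    _ = ((F : ℝ) * K * hbar) * D := by
        rw [hB]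
        calc Real.sqrt F * ((K : ℝ) * hbar * (Real.sqrt F * D))
            = (Real.sqrt F * Real.sqrt F) * ((K : ℝ) * hbar * D) := by ring
          _ = ((F : ℝ) * K * hbar) * D := by
              rw [Real.mul_self_sqrt (Nat.cast_nonneg F)]; ring

lemma gnn_foldl_bound {F K : ℕ} {W : ℝ → ℝ → ℝ} {ρ : ℝ → ℝ} {hbar : ℝ}
    (hWm : Measurable (Function.uncurry W))
    (hW : ∀ᵐ v ∂μI, ∀ᵐ u ∂μI, |W u v| ≤ 1) (hρ : NormalizedLipschitz ρ)
    (hbar0 : 0 ≤ hbar) (hs : List (Fin F → Fin F → Fin K → ℝ)) :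
    ∀ (X Xt : Fin F → ℝ → ℝ), (∀ g, MemLp (X g) ⊤ μI) → (∀ g, MemLp (Xt g) ⊤ μI) →
      (∀ hl ∈ hs, ∀ f g k, |hl f g k| ≤ hbar) →
      vecLpNorm F ⊤ (fun f u =>
          hs.foldl (fun Y hl => gnnLayer F K W ρ hl Y) X f u -
          hs.foldl (fun Y hl => gnnLayer F K W ρ hl Y) Xt f u)
        ≤ ((F : ℝ) * K * hbar) ^ hs.length *
            vecLpNorm F ⊤ (fun f u => X f u - Xt f u) := by
  induction hs with
  | nil => intro X Xt hX hXt hhs; simp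
  | cons hl hs ih =>
    intro X Xt hX hXt hhs
    simp only [List.foldl_cons, List.length_cons]
    have hc0 : (0 : ℝ) ≤ (F : ℝ) * K * hbar := by positivity
    have h1 := ih (gnnLayer F K W ρ hl X) (gnnLayer F K W ρ hl Xt)
      (fun g => gnnLayer_memLp hWm hW hρ hl hX g)
      (fun g => gnnLayer_memLp hWm hW hρ hl hXt g)
      (fun l hlmem => hhs l (List.mem_cons_of_mem _ hlmem))
    have h2 := gnnLayer_diff_bound hWm hW hρ hbar0 hl
      (hhs hl (List.mem_cons_self)) hX hXt
    calc vecLpNorm F ⊤ (fun f u =>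
            hs.foldl (fun Y hl => gnnLayer F K W ρ hl Y) (gnnLayer F K W ρ hl X) f u -
            hs.foldl (fun Y hl => gnnLayer F K W ρ hl Y) (gnnLayer F K W ρ hl Xt) f u)
        ≤ ((F : ℝ) * K * hbar) ^ hs.length *
            vecLpNorm F ⊤ (fun f u => gnnLayer F K W ρ hl X f u - gnnLayer F K W ρ hl Xt f u) :=
          h1
      _ ≤ ((F : ℝ) * K * hbar) ^ hs.length *
            (((F : ℝ) * K * hbar) * vecLpNorm F ⊤ (fun f u => X f u - Xt f u)) :=
          mul_le_mul_of_nonneg_left h2 (pow_nonneg hc0 _)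
      _ = ((F : ℝ) * K * hbar) ^ (hs.length + 1) *
            vecLpNorm F ⊤ (fun f u => X f u - Xt f u) := by ring

end AuxGNN

/-- **Lipschitz estimate for graphon neural networks in `L^∞`.**
For a normalized Lipschitz activation, `|W| ≤ 1` a.e., and filters bounded by `h̄`, the `L`-layer
graphon neural network satisfies
`‖Φ(W;X;h) − Φ(W;X̃;h)‖_{L^∞(I;ℝ^F)} ≤ (F K h̄)^L ‖X − X̃‖_{L^∞(I;ℝ^F)}`. -/
theorem gnn_lipschitz_Linfty
    (F K L : ℕ) (hF : 1 ≤ F) (hK : 1 ≤ K) (hL : 1 ≤ L)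
    (ρ : ℝ → ℝ) (hρ : NormalizedLipschitz ρ)
    (W : ℝ → ℝ → ℝ) (hWm : Measurable (Function.uncurry W))
    (hWb : ∀ᵐ q ∂μI2, |Function.uncurry W q| ≤ 1)
    (h : Fin L → Fin F → Fin F → Fin K → ℝ) (hbar : ℝ)
    (hh : ∀ ℓ f g k, |h ℓ f g k| ≤ hbar)
    (X Xt : Fin F → ℝ → ℝ)
    (hX : ∀ f, MemLp (X f) ⊤ μI) (hXt : ∀ f, MemLp (Xt f) ⊤ μI) :
    vecLpNorm F ⊤ (fun f u => gnn F K L W ρ h X f u - gnn F K L W ρ h Xt f u)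
      ≤ ((F : ℝ) * K * hbar) ^ L * vecLpNorm F ⊤ (fun f u => X f u - Xt f u) := by
  have hbar0 : 0 ≤ hbar := le_trans (abs_nonneg _) (hh ⟨0, hL⟩ ⟨0, hF⟩ ⟨0, hF⟩ ⟨0, hK⟩)
  have hW := aeW hWm hWb
  have hmain := gnn_foldl_bound hWm hW hρ hbar0 (List.ofFn h) X Xt hX hXt
    (fun hl hmem f g k => by
      obtain ⟨ℓ, rfl⟩ := List.mem_ofFn.mp hmem
      exact hh ℓ f g k)
  simpa [gnn, List.length_ofFn] using hmain
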